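/- Composing Ramanujan's transformation formulas for φ and ψ yields W(π²/α) = (α/π)^{3/2} · W(α) for all α with Re α > 0, where W(α) = ∫_0^∞ e^{−(3/2)αx²}(cosh((5/2)αx) + cosh((1/2)αx))/cosh(3αx) dx. -/

import Mathlib

open Complex
open scoped Real

/-- The q-Pochhammer symbol `(a;b)_n = ∏_{j=0}^{n-1} (1 - a b^j)`. -/
noncomputable def qPoch (a b : ℂ) (n : ℕ) : ℂ := ∏ j ∈ Finset.range n, (1 - a * b ^ j)

/-- Ramanujan's mock theta function `φ(q) = ∑_{n≥0} q^{n²} / (-q²;q²)_n`. -/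
noncomputable def phiF (q : ℂ) : ℂ := ∑' n : ℕ, q ^ (n ^ 2) / qPoch (-q ^ 2) (q ^ 2) n

/-- Ramanujan's mock theta function `ψ(q) = ∑_{n≥1} q^{n²} / (q;q²)_n`. -/
noncomputable def psiF (q : ℂ) : ℂ := ∑' n : ℕ, q ^ ((n + 1) ^ 2) / qPoch q (q ^ 2) (n + 1)

/-- The Mordell-type integral `W(α)`. -/
noncomputable def Wc (α : ℂ) : ℂ :=
  ∫ x in Set.Ioi (0 : ℝ), Complex.exp (-(3 / 2) * α * (x : ℂ) ^ 2) *
    (Complex.cosh ((5 / 2) * α * (x : ℂ)) + Complex.cosh ((1 / 2) * α * (x : ℂ))) /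
    Complex.cosh (3 * α * (x : ℂ))

lemma sqrt_exp_log (c : ℝ) (hc : 0 < c) :
    (Real.sqrt c : ℂ) = Complex.exp ((Real.log c : ℂ) / 2) := by
  rw [show ((Real.log c : ℂ) / 2) = ((Real.log c / 2 : ℝ) : ℂ) by push_cast; ring,
      ← Complex.ofReal_exp]
  norm_cast
  rw [Real.sqrt_eq_rpow, Real.rpow_def_of_pos hc]
  ring_nf

lemma aux_cpow_half_mul (c : ℝ) (hc : 0 < c) (z : ℂ) (hz : z ≠ 0) :
    ((c : ℂ) * z) ^ (1 / 2 : ℂ)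
      = (Real.sqrt c : ℂ) * Complex.exp (Complex.log z / 2) := by
  rw [Complex.cpow_def_of_ne_zero (mul_ne_zero (by exact_mod_cast hc.ne') hz),
      Complex.log_ofReal_mul hc hz,
      show ((Real.log c : ℂ) + Complex.log z) * (1 / 2)
        = (Real.log c : ℂ) / 2 + Complex.log z / 2 by ring,
      Complex.exp_add, sqrt_exp_log c hc]

lemma aux_cpow_half_div (c : ℝ) (hc : 0 < c) (z : ℂ) (hz : z ≠ 0) (harg : z.arg ≠ π) :
    ((c : ℂ) / z) ^ (1 / 2 : ℂ)
      = (Real.sqrt c : ℂ) * (Complex.exp (Complex.log z / 2))⁻¹ := by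
  rw [div_eq_mul_inv, aux_cpow_half_mul c hc z⁻¹ (inv_ne_zero hz), Complex.log_inv z harg,
      neg_div, Complex.exp_neg]

lemma aux_cpow_threehalf_mul (c : ℝ) (hc : 0 < c) (z : ℂ) (hz : z ≠ 0) :
    ((c : ℂ) * z) ^ (3 / 2 : ℂ)
      = (c : ℂ) * (Real.sqrt c : ℂ) * (z * Complex.exp (Complex.log z / 2)) := by
  rw [Complex.cpow_def_of_ne_zero (mul_ne_zero (by exact_mod_cast hc.ne') hz),
      Complex.log_ofReal_mul hc hz,
      show ((Real.log c : ℂ) + Complex.log z) * (3 / 2)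
        = ((Real.log c : ℂ) + (Real.log c : ℂ) / 2) + (Complex.log z + Complex.log z / 2) by ring,
      Complex.exp_add, Complex.exp_add, Complex.exp_add, sqrt_exp_log c hc,
      Complex.exp_log hz]
  rw [show ((Real.log c : ℂ)) = ((Real.log c : ℝ) : ℂ) by norm_cast, ← Complex.ofReal_exp,
      Real.exp_log hc]

theorem W_functional_equation
    (h1 : ∀ α : ℂ, 0 < α.re →
      Complex.exp (α / 24) * phiF (Complex.exp (-α))
        = (4 * (π : ℂ) / α) ^ (1 / 2 : ℂ) * Complex.exp ((π : ℂ) ^ 2 / (24 * α)) *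
            psiF (Complex.exp (-(π : ℂ) ^ 2 / α)) + (6 * α / (π : ℂ)) ^ (1 / 2 : ℂ) * Wc α)
    (h2 : ∀ α : ℂ, 0 < α.re →
      Complex.exp (α / 24) * psiF (Complex.exp (-α))
        = ((π : ℂ) / (4 * α)) ^ (1 / 2 : ℂ) * Complex.exp ((π : ℂ) ^ 2 / (24 * α)) *
            phiF (Complex.exp (-(π : ℂ) ^ 2 / α)) - (3 * α / (2 * (π : ℂ))) ^ (1 / 2 : ℂ) * Wc α)
    (α : ℂ) (hα : 0 < α.re) :
    Wc ((π : ℂ) ^ 2 / α) = (α / (π : ℂ)) ^ (3 / 2 : ℂ) * Wc α := by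
  have hπ : (0:ℝ) < π := Real.pi_pos
  have hα0 : α ≠ 0 := by intro h; rw [h] at hα; simp at hα
  have hπc : (π:ℂ) ≠ 0 := by exact_mod_cast hπ.ne'
  set t := Complex.exp (Complex.log α / 2) with ht
  have htne : t ≠ 0 := Complex.exp_ne_zero _
  have ht2 : t * t = α := by rw [ht, ← Complex.exp_add, add_halves, Complex.exp_log hα0]
  have harg : α.arg ≠ π := by
    have h := Complex.abs_arg_lt_pi_div_two_iff.mpr (Or.inl hα)
    intro hc; rw [hc, abs_of_pos hπ] at h; linarith
  have hβre : 0 < ((π:ℂ)^2/α).re := by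
    rw [div_eq_mul_inv, show ((π:ℂ)^2) = ((π^2:ℝ):ℂ) by push_cast; ring,
        Complex.re_ofReal_mul, Complex.inv_re]
    have hns := Complex.normSq_pos.mpr hα0
    positivity
  have h1' := h1 α hα
  have h2' := h2 ((π:ℂ)^2/α) hβre
  -- rewrite cpow bases in h1'
  rw [show (4*(π:ℂ)/α) = ((4*π:ℝ):ℂ)/α by push_cast; ring,
      aux_cpow_half_div (4*π) (by positivity) α hα0 harg,
      show (6*α/(π:ℂ)) = ((6/π:ℝ):ℂ)*α by push_cast; field_simp; try ring,
      aux_cpow_half_mul (6/π) (by positivity) α hα0] at h1'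
  -- rewrite everything in h2'
  rw [show ((π:ℂ)/(4*((π:ℂ)^2/α))) = ((1/(4*π):ℝ):ℂ)*α by push_cast; field_simp; try ring,
      aux_cpow_half_mul (1/(4*π)) (by positivity) α hα0,
      show (3*((π:ℂ)^2/α)/(2*(π:ℂ))) = ((3*π/2:ℝ):ℂ)/α by push_cast; field_simp; try ring,
      aux_cpow_half_div (3*π/2) (by positivity) α hα0 harg,
      show ((π:ℂ)^2/(24*((π:ℂ)^2/α))) = α/24 by field_simp; try ring,
      show (-(π:ℂ)^2/((π:ℂ)^2/α)) = -α by field_simp; try ring,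
      show ((π:ℂ)^2/α/24) = (π:ℂ)^2/(24*α) by ring,
      show (-((π:ℂ)^2/α)) = -(π:ℂ)^2/α by ring] at h2'
  -- rewrite the goal
  rw [show (α/(π:ℂ)) = ((π⁻¹:ℝ):ℂ)*α by push_cast; field_simp; try ring,
      aux_cpow_threehalf_mul (π⁻¹) (by positivity) α hα0]
  -- inverse-free versions
  have H1 : t * (Complex.exp (α/24) * phiF (Complex.exp (-α)))
      = (Real.sqrt (4*π) : ℂ) * (Complex.exp ((π:ℂ)^2/(24*α)) * psiF (Complex.exp (-(π:ℂ)^2/α)))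
        + (Real.sqrt (6/π) : ℂ) * (t*t) * Wc α := by
    rw [h1']; field_simp; try ring
  have H2 : t * (Complex.exp ((π:ℂ)^2/(24*α)) * psiF (Complex.exp (-(π:ℂ)^2/α)))
      = (Real.sqrt (1/(4*π)) : ℂ) * (t*t) *
          (Complex.exp (α/24) * phiF (Complex.exp (-α)))
        - (Real.sqrt (3*π/2) : ℂ) * Wc ((π:ℂ)^2/α) := by
    rw [h2']; field_simp; try ring
  -- real sqrt identities
  have r1 : Real.sqrt (4*π) * Real.sqrt (1/(4*π)) = 1 := by
    rw [← Real.sqrt_mul (by positivity), mul_one_div, div_self (by positivity), Real.sqrt_one]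
  have r2 : Real.sqrt (4*π) * Real.sqrt (3*π/2) * (π⁻¹ * Real.sqrt π⁻¹) = Real.sqrt (6/π) := by
    have e1 : Real.sqrt (4*π) * Real.sqrt (3*π/2) * Real.sqrt π⁻¹ = Real.sqrt (6*π) := by
      rw [← Real.sqrt_mul (show (0:ℝ) ≤ 4*π by positivity) (3*π/2),
          ← Real.sqrt_mul (show (0:ℝ) ≤ 4*π*(3*π/2) by positivity) π⁻¹]
      congr 1
      field_simp
      ring
    have e2 : Real.sqrt (6*π) * π⁻¹ = Real.sqrt (6/π) := by
      rw [show (6:ℝ)/π = 6*π*(π⁻¹)^2 by field_simp; try ring,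
          Real.sqrt_mul (show (0:ℝ) ≤ 6*π by positivity), Real.sqrt_sq (by positivity)]
    calc Real.sqrt (4*π) * Real.sqrt (3*π/2) * (π⁻¹ * Real.sqrt π⁻¹)
        = Real.sqrt (4*π) * Real.sqrt (3*π/2) * Real.sqrt π⁻¹ * π⁻¹ := by ring
      _ = Real.sqrt (6*π) * π⁻¹ := by rw [e1]
      _ = Real.sqrt (6/π) := e2
  have r1c : (Real.sqrt (4*π) : ℂ) * (Real.sqrt (1/(4*π)) : ℂ) = 1 := by
    rw [← Complex.ofReal_mul, r1, Complex.ofReal_one]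
  have r2c : (Real.sqrt (4*π) : ℂ) * (Real.sqrt (3*π/2) : ℂ)
      * (((π⁻¹:ℝ):ℂ) * ((Real.sqrt π⁻¹ : ℝ):ℂ)) = (Real.sqrt (6/π) : ℂ) := by
    push_cast [← r2]; ring
  have key : (Real.sqrt (4*π) : ℂ) * (Real.sqrt (3*π/2) : ℂ) * Wc ((π:ℂ)^2/α)
      = (Real.sqrt (6/π) : ℂ) * (α * t) * Wc α := by
    linear_combination t * H1 + (Real.sqrt (4*π) : ℂ) * H2
      + ((Real.sqrt (6/π) : ℂ) * t * Wc α) * ht2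
      + (t * t * (Complex.exp (α/24) * phiF (Complex.exp (-α)))) * r1c
  have hs1 : (Real.sqrt (4*π) : ℂ) ≠ 0 := by
    exact_mod_cast (Real.sqrt_pos.mpr (by positivity)).ne'
  have hs4 : (Real.sqrt (3*π/2) : ℂ) ≠ 0 := by
    exact_mod_cast (Real.sqrt_pos.mpr (by positivity)).ne'
  apply mul_left_cancel₀ (mul_ne_zero hs1 hs4)
  linear_combination key - (α * t * Wc α) * r2c
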